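/- Let β ≥ γ ≥ 0 with β + γ > 1 and γ < 1. Then there exists a constant C = C(β,γ) > 0 such that for all k₁, k₂ ∈ ℝ, ∫_ℝ ⟨τ − k₁⟩^{−β} |τ − k₂|^{−γ} dτ ≤ C ⟨k₁ − k₂⟩^{−γ} φ_β(k₁ − k₂), where φ_β(k) = 1 if β > 1, φ_β(k) = log(1 + ⟨k⟩) if β = 1, and φ_β(k) = ⟨k⟩^{1−β} if β < 1. -/

import Mathlib

open MeasureTheory Real
open scoped ENNReal

/-- Japanese bracket `⟨x⟩ = (1 + x²)^{1/2}`. -/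
noncomputable def jap (x : ℝ) : ℝ := Real.sqrt (1 + x ^ 2)

/-- The function `φ_β` from the calculus lemma. -/
noncomputable def phiβ (β k : ℝ) : ℝ :=
  if 1 < β then 1
  else if β = 1 then Real.log (1 + jap k)
  else jap k ^ (1 - β)


open Set


lemma jap_nonneg (x : ℝ) : 0 ≤ jap x := Real.sqrt_nonneg _

lemma one_le_jap (x : ℝ) : 1 ≤ jap x := by
  have h : (1:ℝ) ≤ 1 + x ^ 2 := by nlinarith
  calc (1:ℝ) = Real.sqrt 1 := Real.sqrt_one.symm
    _ ≤ jap x := Real.sqrt_le_sqrt h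

lemma jap_pos (x : ℝ) : 0 < jap x := lt_of_lt_of_le one_pos (one_le_jap x)

lemma jap_sq (x : ℝ) : jap x ^ 2 = 1 + x ^ 2 := Real.sq_sqrt (by positivity)

lemma abs_le_jap (x : ℝ) : |x| ≤ jap x := by
  rw [← Real.sqrt_sq_eq_abs]
  exact Real.sqrt_le_sqrt (by nlinarith)

lemma jap_neg (x : ℝ) : jap (-x) = jap x := by simp [jap]

lemma jap_peetre {σ k : ℝ} (h : |σ| ≤ jap k / 2) : jap k / 2 ≤ jap (σ - k) := by
  have h2 : σ ^ 2 ≤ (jap k / 2) ^ 2 := by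
    have h0 := abs_nonneg σ
    nlinarith [sq_abs σ]
  have e1 := jap_sq k
  have e2 := jap_sq (σ - k)
  have hj := jap_nonneg (σ - k)
  have hk := jap_nonneg k
  nlinarith [sq_nonneg (2 * σ - k), sq_nonneg (jap (σ - k) + jap k / 2)]

lemma lintegral_comp_neg (g : ℝ → ℝ≥0∞) (hg : Measurable g) :
    ∫⁻ x : ℝ, g (-x) = ∫⁻ x : ℝ, g x := by
  conv_rhs => rw [← Measure.map_neg_eq_self (volume : Measure ℝ)]
  rw [lintegral_map hg measurable_neg]

lemma lintegral_neg_set (f : ℝ → ℝ≥0∞) (hf : Measurable f) (hsym : ∀ x, f (-x) = f x)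
    {s t : Set ℝ} (hs : MeasurableSet s) (ht : MeasurableSet t)
    (hst : ∀ x, -x ∈ s ↔ x ∈ t) :
    ∫⁻ x in s, f x = ∫⁻ x in t, f x := by
  rw [← lintegral_indicator hs, ← lintegral_indicator ht,
    ← lintegral_comp_neg (s.indicator f) (hf.indicator hs)]
  congr 1; funext x
  by_cases hx : x ∈ t
  · rw [Set.indicator_of_mem ((hst x).2 hx), Set.indicator_of_mem hx, hsym]
  · rw [Set.indicator_of_notMem (fun h => hx ((hst x).1 h)), Set.indicator_of_notMem hx]

noncomputable def Mb (β K : ℝ) : ℝ :=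
  if 1 < β then 1 / (β - 1) else if β = 1 then Real.log K else K ^ (1 - β) / (1 - β)

lemma Mb_nonneg {β K : ℝ} (hK : 1 ≤ K) : 0 ≤ Mb β K := by
  unfold Mb; split_ifs with h1 h2
  · have : (0:ℝ) < β - 1 := by linarith
    positivity
  · exact Real.log_nonneg hK
  · have h3 : (0:ℝ) < 1 - β := by
      rcases lt_or_eq_of_le (not_lt.1 h1) with h | h
      · linarith
      · exact absurd h h2
    have h4 : 0 ≤ K ^ (1 - β) := Real.rpow_nonneg (by linarith) _
    positivity

lemma lint_Ioc_rpow {p R : ℝ} (hp : -1 < p) (hR : 0 < R) :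
    ∫⁻ x in Ioc (0:ℝ) R, ENNReal.ofReal (x ^ p) = ENNReal.ofReal (R ^ (p + 1) / (p + 1)) := by
  have hi : IntegrableOn (fun x : ℝ => x ^ p) (Ioc 0 R) := by
    rw [← intervalIntegrable_iff_integrableOn_Ioc_of_le hR.le]
    exact intervalIntegral.intervalIntegrable_rpow' hp
  have hnn : 0 ≤ᵐ[volume.restrict (Ioc (0:ℝ) R)] fun x : ℝ => x ^ p := by
    filter_upwards [ae_restrict_mem measurableSet_Ioc] with x hx
    exact Real.rpow_nonneg hx.1.le _
  rw [← ofReal_integral_eq_lintegral_ofReal hi hnn]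
  congr 1
  rw [← intervalIntegral.integral_of_le hR.le, integral_rpow (Or.inl hp),
    Real.zero_rpow (by linarith : p + 1 ≠ 0)]
  ring

lemma lint_trunc {β K : ℝ} (hK : 1 ≤ K) :
    ∫⁻ x in Ioc (1:ℝ) K, ENNReal.ofReal (x ^ (-β)) ≤ ENNReal.ofReal (Mb β K) := by
  have h0 : (0:ℝ) ∉ Set.uIcc (1:ℝ) K := by
    rw [Set.uIcc_of_le hK]
    intro h
    exact absurd h.1 (by norm_num)
  have hi : IntegrableOn (fun x : ℝ => x ^ (-β)) (Ioc 1 K) := by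
    rw [← intervalIntegrable_iff_integrableOn_Ioc_of_le hK]
    exact intervalIntegral.intervalIntegrable_rpow (Or.inr h0)
  have hnn : 0 ≤ᵐ[volume.restrict (Ioc (1:ℝ) K)] fun x : ℝ => x ^ (-β) := by
    filter_upwards [ae_restrict_mem measurableSet_Ioc] with x hx
    exact Real.rpow_nonneg (by linarith [hx.1]) _
  rw [← ofReal_integral_eq_lintegral_ofReal hi hnn]
  apply ENNReal.ofReal_le_ofReal
  rw [← intervalIntegral.integral_of_le hK]
  rcases lt_trichotomy β 1 with hb | hb | hb
  · rw [integral_rpow (Or.inl (by linarith))]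
    unfold Mb
    rw [if_neg (by linarith), if_neg (by linarith), Real.one_rpow]
    have h1 : (0:ℝ) < 1 - β := by linarith
    have heq : -β + 1 = 1 - β := by ring
    rw [heq]
    rw [div_le_div_iff₀ h1 h1]
    nlinarith
  · subst hb
    simp_rw [Real.rpow_neg_one]
    rw [integral_inv h0]
    unfold Mb
    rw [if_neg (lt_irrefl 1), if_pos rfl, div_one]
  · have hne : -β ≠ -1 := by intro h; have : β = 1 := neg_injective h; linarith
    rw [integral_rpow (Or.inr ⟨hne, h0⟩), Real.one_rpow]
    unfold Mb
    rw [if_pos hb]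
    have h1 : (0:ℝ) < β - 1 := by linarith
    have ht1 : K ^ (-β + 1) ≤ 1 :=
      Real.rpow_le_one_of_one_le_of_nonpos hK (by linarith)
    have ht0 : 0 ≤ K ^ (-β + 1) := Real.rpow_nonneg (by linarith) _
    have heq : (K ^ (-β + 1) - 1) / (-β + 1) = (1 - K ^ (-β + 1)) / (β - 1) := by
      rw [div_eq_div_iff (by linarith : -β + 1 ≠ 0) (by linarith : β - 1 ≠ 0)]
      ring
    rw [heq, div_le_div_iff₀ h1 h1]
    nlinarith

lemma lint_tail {p r : ℝ} (hp : p < -1) (hr : 0 < r) :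
    ∫⁻ x in Ioi r, ENNReal.ofReal (x ^ p) = ENNReal.ofReal (r ^ (p + 1) / (-(p + 1))) := by
  have hnn : 0 ≤ᵐ[volume.restrict (Ioi r)] fun x : ℝ => x ^ p := by
    filter_upwards [ae_restrict_mem measurableSet_Ioi] with x hx
    exact Real.rpow_nonneg (le_of_lt (hr.trans hx)) _
  rw [← ofReal_integral_eq_lintegral_ofReal (integrableOn_Ioi_rpow_of_lt hp hr) hnn]
  congr 1
  rw [integral_Ioi_rpow_of_lt hp hr, div_neg, ← neg_div]

lemma meas_abs_rpow (c p : ℝ) :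
    Measurable fun x : ℝ => ENNReal.ofReal (c * |x| ^ p) := by
  fun_prop

lemma meas_jap_rpow (c p : ℝ) :
    Measurable fun x : ℝ => ENNReal.ofReal (c * jap x ^ p) := by
  have : Continuous jap := by
    unfold jap
    fun_prop
  fun_prop

lemma lint_abs_Icc {γ R : ℝ} (hγ1 : γ < 1) (hR : 0 < R) :
    ∫⁻ x in Icc (-R) R, ENNReal.ofReal (|x| ^ (-γ)) ≤
      ENNReal.ofReal (2 * (R ^ (1 - γ) / (1 - γ))) := by
  have hmeas : Measurable fun x : ℝ => ENNReal.ofReal (|x| ^ (-γ)) := by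
    have := meas_abs_rpow 1 (-γ); simpa using this
  have hset : Icc (-R) R = Ico (-R) 0 ∪ Icc 0 R :=
    (Ico_union_Icc_eq_Icc (by linarith) hR.le).symm
  have hneg : ∫⁻ x in Ico (-R) 0, ENNReal.ofReal (|x| ^ (-γ))
      = ∫⁻ x in Ioc 0 R, ENNReal.ofReal (|x| ^ (-γ)) := by
    apply lintegral_neg_set _ hmeas (fun x => by rw [abs_neg])
      measurableSet_Ico measurableSet_Ioc
    intro x
    simp only [Set.mem_Ico, Set.mem_Ioc]
    constructor
    · rintro ⟨h1, h2⟩; exact ⟨by linarith, by linarith⟩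
    · rintro ⟨h1, h2⟩; exact ⟨by linarith, by linarith⟩
  have hIcc : ∫⁻ x in Icc 0 R, ENNReal.ofReal (|x| ^ (-γ))
      = ∫⁻ x in Ioc 0 R, ENNReal.ofReal (|x| ^ (-γ)) :=
    (setLIntegral_congr Ioc_ae_eq_Icc).symm
  have habs : ∫⁻ x in Ioc 0 R, ENNReal.ofReal (|x| ^ (-γ))
      = ∫⁻ x in Ioc 0 R, ENNReal.ofReal (x ^ (-γ)) := by
    apply setLIntegral_congr_fun measurableSet_Ioc
    exact fun x hx => by simp only [abs_of_pos hx.1]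
  have hval := lint_Ioc_rpow (by linarith : (-1:ℝ) < -γ) hR
  rw [hset]
  refine le_trans (lintegral_union_le _ _ _) ?_
  rw [hneg, hIcc, habs, hval]
  have h1g : (0:ℝ) < -γ + 1 := by linarith
  have hnum : (0:ℝ) ≤ R ^ (-γ + 1) := Real.rpow_nonneg hR.le _
  rw [← ENNReal.ofReal_add (div_nonneg hnum h1g.le) (div_nonneg hnum h1g.le)]
  apply ENNReal.ofReal_le_ofReal
  have : -γ + 1 = 1 - γ := by ring
  rw [this]
  ring_nf
  exact le_refl _

lemma lint_jap_Icc {β K : ℝ} (hβ : 0 ≤ β) (hK : 1 ≤ K) :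
    ∫⁻ u in Icc (-K) K, ENNReal.ofReal (jap u ^ (-β)) ≤
      ENNReal.ofReal (2 + 2 * Mb β K) := by
  have hmeas : Measurable fun u : ℝ => ENNReal.ofReal (jap u ^ (-β)) := by
    have := meas_jap_rpow 1 (-β); simpa using this
  have hset : Icc (-K) K = Ico (-K) (-1) ∪ (Icc (-1) 1 ∪ Ioc 1 K) := by
    rw [Icc_union_Ioc_eq_Icc (by linarith) hK, Ico_union_Icc_eq_Icc (by linarith) (by linarith)]
  have hneg : ∫⁻ u in Ico (-K) (-1), ENNReal.ofReal (jap u ^ (-β))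
      = ∫⁻ u in Ioc 1 K, ENNReal.ofReal (jap u ^ (-β)) := by
    apply lintegral_neg_set _ hmeas (fun x => by rw [jap_neg])
      measurableSet_Ico measurableSet_Ioc
    intro x
    simp only [Set.mem_Ico, Set.mem_Ioc]
    constructor
    · rintro ⟨h1, h2⟩; exact ⟨by linarith, by linarith⟩
    · rintro ⟨h1, h2⟩; exact ⟨by linarith, by linarith⟩
  have hmid : ∫⁻ u in Icc (-1:ℝ) 1, ENNReal.ofReal (jap u ^ (-β)) ≤ ENNReal.ofReal 2 := by
    calc ∫⁻ u in Icc (-1:ℝ) 1, ENNReal.ofReal (jap u ^ (-β))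
        ≤ ∫⁻ _ in Icc (-1:ℝ) 1, 1 := by
          apply setLIntegral_mono measurable_const
          intro x _
          exact ENNReal.ofReal_le_one.mpr
            (Real.rpow_le_one_of_one_le_of_nonpos (one_le_jap x) (neg_nonpos.2 hβ))
      _ = ENNReal.ofReal 2 := by
          rw [setLIntegral_const, one_mul, Real.volume_Icc]
          norm_num
  have hside : ∫⁻ u in Ioc (1:ℝ) K, ENNReal.ofReal (jap u ^ (-β)) ≤ ENNReal.ofReal (Mb β K) := by
    refine le_trans ?_ (lint_trunc hK)
    apply setLIntegral_mono (by fun_prop)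
    intro x hx
    apply ENNReal.ofReal_le_ofReal
    exact Real.rpow_le_rpow_of_nonpos (by linarith [hx.1]) (abs_le_jap x |>.trans_eq' (abs_of_pos (show (0:ℝ) < x by linarith [hx.1]))) (neg_nonpos.2 hβ)
  have hMb := Mb_nonneg (β := β) hK
  rw [hset]
  refine le_trans (lintegral_union_le _ _ _) ?_
  refine le_trans (add_le_add le_rfl (lintegral_union_le _ _ _)) ?_
  rw [hneg]
  calc (∫⁻ u in Ioc 1 K, ENNReal.ofReal (jap u ^ (-β)))
        + ((∫⁻ u in Icc (-1:ℝ) 1, ENNReal.ofReal (jap u ^ (-β)))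
          + ∫⁻ u in Ioc 1 K, ENNReal.ofReal (jap u ^ (-β)))
      ≤ ENNReal.ofReal (Mb β K) + (ENNReal.ofReal 2 + ENNReal.ofReal (Mb β K)) :=
        add_le_add hside (add_le_add hmid hside)
    _ = ENNReal.ofReal (2 + 2 * Mb β K) := by
        rw [← ENNReal.ofReal_add (by norm_num) hMb, ← ENNReal.ofReal_add hMb (by linarith)]
        congr 1
        ring

lemma log_two_pos' : (0:ℝ) < Real.log 2 := Real.log_pos (by norm_num)

lemma log_two_le_one' : Real.log 2 ≤ 1 := by
  have := Real.log_le_sub_one_of_pos (by norm_num : (0:ℝ) < 2)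
  linarith

lemma log_two_le_phi (β k : ℝ) : Real.log 2 ≤ phiβ β k := by
  unfold phiβ
  split_ifs with h1 h2
  · exact log_two_le_one'
  · exact Real.log_le_log (by norm_num) (by linarith [one_le_jap k])
  · have h3 : β ≤ 1 := not_lt.1 h1
    have : (1:ℝ) ≤ jap k ^ (1 - β) :=
      Real.one_le_rpow (one_le_jap k) (by linarith)
    linarith [log_two_le_one']

lemma phi_nonneg (β k : ℝ) : 0 ≤ phiβ β k :=
  le_trans log_two_pos'.le (log_two_le_phi β k)

lemma K_pow_le_phi (β k : ℝ) : jap k ^ (1 - β) ≤ phiβ β k / Real.log 2 := by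
  have hL2 := log_two_pos'
  have hφ := log_two_le_phi β k
  unfold phiβ at *
  split_ifs with h1 h2
  · have hle : jap k ^ (1 - β) ≤ 1 :=
      Real.rpow_le_one_of_one_le_of_nonpos (one_le_jap k) (by linarith)
    rw [le_div_iff₀ hL2]
    nlinarith [Real.rpow_nonneg (jap_nonneg k) (1 - β), log_two_le_one']
  · rw [h2]
    simp only [sub_self, Real.rpow_zero]
    rw [le_div_iff₀ hL2, one_mul]
    simp only [h2] at hφ
    split_ifs at hφ with h
    · linarith
    · exact hφ
  · rw [le_div_iff₀ hL2]
    have h0 : 0 ≤ jap k ^ (1 - β) := Real.rpow_nonneg (jap_nonneg k) _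
    nlinarith [log_two_le_one']

lemma Mb_le_phi {β : ℝ} (k : ℝ) :
    Mb β (jap k) ≤ (if β = 1 then 1 else 1 / |β - 1|) * phiβ β k := by
  unfold Mb phiβ
  rcases lt_trichotomy β 1 with h | h | h
  · simp only [if_neg (show ¬(1 < β) by linarith), if_neg (show ¬(β = 1) by linarith)]
    rw [abs_of_neg (by linarith : β - 1 < 0), show -(β - 1) = 1 - β by ring]
    apply le_of_eq
    ring
  · simp only [if_neg (show ¬(1 < β) by linarith), if_pos h, one_mul]
    exact Real.log_le_log (jap_pos k) (by linarith [jap_nonneg k])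
  · simp only [if_pos (show 1 < β from h), if_neg (show ¬(β = 1) by linarith), mul_one]
    rw [abs_of_pos (by linarith : (0:ℝ) < β - 1)]

lemma half_rpow_neg {x q : ℝ} (hx : 0 ≤ x) : (x / 2) ^ (-q) = 2 ^ q * x ^ (-q) := by
  rw [Real.div_rpow hx (by norm_num : (0:ℝ) ≤ 2), Real.rpow_neg (by norm_num : (0:ℝ) ≤ 2),
    div_inv_eq_mul, mul_comm]

/-- Calculus lemma, second version: for `β ≥ γ ≥ 0` with `β + γ > 1` and `γ < 1`,
`∫_ℝ ⟨τ − k₁⟩^{−β} |τ − k₂|^{−γ} dτ ≲ ⟨k₁ − k₂⟩^{−γ} φ_β(k₁ − k₂)`. -/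
theorem stmt1 (β γ : ℝ) (hγ : 0 ≤ γ) (hβγ : γ ≤ β) (hsum : 1 < β + γ) (hγ1 : γ < 1) :
    ∃ C > (0:ℝ), ∀ k₁ k₂ : ℝ,
      ∫⁻ τ : ℝ, ENNReal.ofReal (jap (τ - k₁) ^ (-β) * |τ - k₂| ^ (-γ)) ≤
        ENNReal.ofReal (C * jap (k₁ - k₂) ^ (-γ) * phiβ β (k₁ - k₂)) := by
  have hβ : 0 ≤ β := le_trans hγ hβγ
  have hL2 := log_two_pos'
  have h1γ : (0:ℝ) < 1 - γ := by linarith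
  have hs1 : (0:ℝ) < β + γ - 1 := by linarith
  have h2β : (0:ℝ) < 2 ^ β := Real.rpow_pos_of_pos (by norm_num) β
  have h2γ : (0:ℝ) < 2 ^ γ := Real.rpow_pos_of_pos (by norm_num) γ
  have h2s : (0:ℝ) < 2 ^ (β + γ - 1) := Real.rpow_pos_of_pos (by norm_num) _
  set Cm : ℝ := if β = 1 then 1 else 1 / |β - 1| with hCmdef
  have hCm : 0 < Cm := by
    rw [hCmdef]; split_ifs with h
    · norm_num
    · have : (0:ℝ) < |β - 1| := abs_pos.2 (sub_ne_zero.2 h)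
      positivity
  have hcoef : (0:ℝ) < 2 ^ β * 2 / (1 - γ) + 2 ^ β * 2 ^ (β + γ - 1) * 2 / (β + γ - 1) :=
    add_pos (div_pos (by positivity) h1γ) (div_pos (by positivity) hs1)
  refine ⟨(2 ^ β * 2 / (1 - γ) + 2 ^ β * 2 ^ (β + γ - 1) * 2 / (β + γ - 1)) / Real.log 2
      + 2 ^ γ * (2 / Real.log 2 + 2 * Cm), ?_, ?_⟩
  · exact add_pos (div_pos hcoef hL2)
      (mul_pos h2γ (add_pos (div_pos (by norm_num) hL2) (by positivity)))
  intro k₁ k₂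
  set k := k₁ - k₂ with hk
  set K := jap k with hKdef
  have hK1 : 1 ≤ K := one_le_jap k
  have hK0 : (0:ℝ) < K := by linarith
  have hr0 : (0:ℝ) < K / 2 := by linarith
  -- shift
  have hshift : (∫⁻ τ : ℝ, ENNReal.ofReal (jap (τ - k₁) ^ (-β) * |τ - k₂| ^ (-γ)))
      = ∫⁻ σ : ℝ, ENNReal.ofReal (jap (σ - k) ^ (-β) * |σ| ^ (-γ)) := by
    have hsub := lintegral_sub_right_eq_self (μ := volume)
      (fun σ => ENNReal.ofReal (jap (σ - k) ^ (-β) * |σ| ^ (-γ))) k₂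
    rw [← hsub]
    congr 1
    funext τ
    show ENNReal.ofReal (jap (τ - k₁) ^ (-β) * |τ - k₂| ^ (-γ))
      = ENNReal.ofReal (jap (τ - k₂ - k) ^ (-β) * |τ - k₂| ^ (-γ))
    rw [show τ - k₂ - k = τ - k₁ by rw [hk]; ring]
  rw [hshift]
  -- majorants
  set f1 : ℝ → ℝ≥0∞ :=
    (Icc (-(K/2)) (K/2)).indicator
      (fun σ => ENNReal.ofReal (2 ^ β * K ^ (-β) * |σ| ^ (-γ))) with hf1
  set H : ℝ → ℝ≥0∞ :=
    (Icc (-K) K).indicator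
      (fun u => ENNReal.ofReal (2 ^ γ * K ^ (-γ) * jap u ^ (-β))) with hH
  set f3 : ℝ → ℝ≥0∞ :=
    ({x : ℝ | K/2 < |x|}).indicator
      (fun σ => ENNReal.ofReal (2 ^ β * |σ| ^ (-(β + γ)))) with hf3
  have hopen : MeasurableSet {x : ℝ | K/2 < |x|} :=
    (isOpen_lt continuous_const continuous_abs).measurableSet
  have hmf1 : Measurable f1 := (meas_abs_rpow _ _).indicator measurableSet_Icc
  have hmH : Measurable H := (meas_jap_rpow _ _).indicator measurableSet_Icc
  have hmf3 : Measurable f3 := (meas_abs_rpow _ _).indicator hopen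
  have hmf2 : Measurable fun σ => H (σ - k) := hmH.comp (measurable_id.sub_const k)
  -- pointwise bound
  have hpt : ∀ σ : ℝ, ENNReal.ofReal (jap (σ - k) ^ (-β) * |σ| ^ (-γ))
      ≤ f1 σ + H (σ - k) + f3 σ := by
    intro σ
    rcases le_or_gt |σ| (K/2) with hA | hB
    · refine le_trans ?_ (le_self_add.trans le_self_add)
      have hmem : σ ∈ Icc (-(K/2)) (K/2) := by
        rw [mem_Icc]; exact abs_le.1 hA
      rw [hf1, Set.indicator_of_mem hmem]
      apply ENNReal.ofReal_le_ofReal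
      have hp : K / 2 ≤ jap (σ - k) := by
        rw [hKdef]
        exact jap_peetre (by rw [← hKdef]; exact hA)
      have hjap : jap (σ - k) ^ (-β) ≤ 2 ^ β * K ^ (-β) := by
        have h := Real.rpow_le_rpow_of_nonpos hr0 hp (neg_nonpos.2 hβ)
        rwa [half_rpow_neg hK0.le] at h
      exact mul_le_mul_of_nonneg_right hjap (Real.rpow_nonneg (abs_nonneg σ) _)
    · rcases le_or_gt |σ - k| K with hB1 | hB2
      · refine le_trans ?_ (le_add_self.trans le_self_add)
        have hmem : σ - k ∈ Icc (-K) K := by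
          rw [mem_Icc]; exact abs_le.1 hB1
        rw [hH, Set.indicator_of_mem hmem]
        apply ENNReal.ofReal_le_ofReal
        have h1 : |σ| ^ (-γ) ≤ 2 ^ γ * K ^ (-γ) := by
          have h := Real.rpow_le_rpow_of_nonpos hr0 hB.le (neg_nonpos.2 hγ)
          rwa [half_rpow_neg hK0.le] at h
        calc jap (σ - k) ^ (-β) * |σ| ^ (-γ)
            ≤ jap (σ - k) ^ (-β) * (2 ^ γ * K ^ (-γ)) :=
              mul_le_mul_of_nonneg_left h1 (Real.rpow_nonneg (jap_nonneg _) _)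
          _ = 2 ^ γ * K ^ (-γ) * jap (σ - k) ^ (-β) := by ring
      · refine le_trans ?_ le_add_self
        have hmem : σ ∈ {x : ℝ | K/2 < |x|} := hB
        rw [hf3, Set.indicator_of_mem hmem]
        apply ENNReal.ofReal_le_ofReal
        have hσ0 : 0 < |σ| := lt_trans hr0 hB
        have hj : |σ| / 2 ≤ jap (σ - k) := by
          have h1 : |σ| ≤ |σ - k| + |k| := by
            calc |σ| = |(σ - k) + k| := by ring_nf
              _ ≤ |σ - k| + |k| := abs_add_le _ _
          have h2 : |k| ≤ K := by rw [hKdef]; exact abs_le_jap k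
          have h3 := abs_le_jap (σ - k)
          linarith
        have h4 : jap (σ - k) ^ (-β) ≤ 2 ^ β * |σ| ^ (-β) := by
          have h := Real.rpow_le_rpow_of_nonpos (by linarith) hj (neg_nonpos.2 hβ)
          rwa [half_rpow_neg (abs_nonneg σ)] at h
        calc jap (σ - k) ^ (-β) * |σ| ^ (-γ)
            ≤ (2 ^ β * |σ| ^ (-β)) * |σ| ^ (-γ) :=
              mul_le_mul_of_nonneg_right h4 (Real.rpow_nonneg (abs_nonneg σ) _)
          _ = 2 ^ β * |σ| ^ (-(β + γ)) := by
              rw [show -(β + γ) = -β + -γ by ring, Real.rpow_add hσ0]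
              ring
  -- integral bounds
  have bound1 : ∫⁻ σ, f1 σ ≤
      ENNReal.ofReal ((2 ^ β * K ^ (-β)) * (2 * (K ^ (1 - γ) / (1 - γ)))) := by
    have hc : (0:ℝ) ≤ 2 ^ β * K ^ (-β) := by positivity
    rw [hf1, lintegral_indicator measurableSet_Icc]
    calc ∫⁻ x in Icc (-(K/2)) (K/2), ENNReal.ofReal (2 ^ β * K ^ (-β) * |x| ^ (-γ))
        ≤ ∫⁻ x in Icc (-K) K, ENNReal.ofReal (2 ^ β * K ^ (-β) * |x| ^ (-γ)) :=
          lintegral_mono_set (Icc_subset_Icc (by linarith) (by linarith))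
      _ = ENNReal.ofReal (2 ^ β * K ^ (-β)) *
            ∫⁻ x in Icc (-K) K, ENNReal.ofReal (|x| ^ (-γ)) := by
          simp_rw [ENNReal.ofReal_mul hc]
          exact lintegral_const_mul _ (by
            have := meas_abs_rpow 1 (-γ); simpa using this)
      _ ≤ ENNReal.ofReal (2 ^ β * K ^ (-β)) *
            ENNReal.ofReal (2 * (K ^ (1 - γ) / (1 - γ))) :=
          mul_le_mul_right (lint_abs_Icc hγ1 hK0) _
      _ = ENNReal.ofReal ((2 ^ β * K ^ (-β)) * (2 * (K ^ (1 - γ) / (1 - γ)))) :=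
          (ENNReal.ofReal_mul hc).symm
  have bound2 : (∫⁻ σ, H (σ - k)) ≤
      ENNReal.ofReal ((2 ^ γ * K ^ (-γ)) * (2 + 2 * Mb β K)) := by
    have hc : (0:ℝ) ≤ 2 ^ γ * K ^ (-γ) := by positivity
    rw [lintegral_sub_right_eq_self H k, hH, lintegral_indicator measurableSet_Icc]
    calc ∫⁻ u in Icc (-K) K, ENNReal.ofReal (2 ^ γ * K ^ (-γ) * jap u ^ (-β))
        = ENNReal.ofReal (2 ^ γ * K ^ (-γ)) *
            ∫⁻ u in Icc (-K) K, ENNReal.ofReal (jap u ^ (-β)) := by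
          simp_rw [ENNReal.ofReal_mul hc]
          exact lintegral_const_mul _ (by
            have := meas_jap_rpow 1 (-β); simpa using this)
      _ ≤ ENNReal.ofReal (2 ^ γ * K ^ (-γ)) * ENNReal.ofReal (2 + 2 * Mb β K) :=
          mul_le_mul_right (lint_jap_Icc hβ hK1) _
      _ = ENNReal.ofReal ((2 ^ γ * K ^ (-γ)) * (2 + 2 * Mb β K)) :=
          (ENNReal.ofReal_mul hc).symm
  have bound3 : ∫⁻ σ, f3 σ ≤
      ENNReal.ofReal (2 ^ β * ((K/2) ^ (-(β + γ) + 1) / (β + γ - 1))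
        + 2 ^ β * ((K/2) ^ (-(β + γ) + 1) / (β + γ - 1))) := by
    have hp : -(β + γ) < -1 := by linarith
    have hval : ∫⁻ x in Ioi (K/2), ENNReal.ofReal (2 ^ β * |x| ^ (-(β + γ)))
        = ENNReal.ofReal (2 ^ β * ((K/2) ^ (-(β + γ) + 1) / (β + γ - 1))) := by
      have habs : ∫⁻ x in Ioi (K/2), ENNReal.ofReal (2 ^ β * |x| ^ (-(β + γ)))
          = ∫⁻ x in Ioi (K/2), ENNReal.ofReal (2 ^ β * x ^ (-(β + γ))) := by
        apply setLIntegral_congr_fun measurableSet_Ioi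
        exact fun x hx => by simp only [abs_of_pos (lt_trans hr0 hx)]
      rw [habs]
      calc ∫⁻ x in Ioi (K/2), ENNReal.ofReal (2 ^ β * x ^ (-(β + γ)))
          = ENNReal.ofReal (2 ^ β) * ∫⁻ x in Ioi (K/2), ENNReal.ofReal (x ^ (-(β + γ))) := by
            simp_rw [ENNReal.ofReal_mul h2β.le]
            exact lintegral_const_mul _ (by
              have := meas_abs_rpow 1 (-(β + γ))
              have h2 : Measurable fun x : ℝ => ENNReal.ofReal (x ^ (-(β + γ))) := by fun_prop
              exact h2)
        _ = ENNReal.ofReal (2 ^ β) *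
              ENNReal.ofReal ((K/2) ^ (-(β + γ) + 1) / (β + γ - 1)) := by
            rw [lint_tail hp hr0, show (-(-(β + γ) + 1) : ℝ) = β + γ - 1 from by ring]
        _ = ENNReal.ofReal (2 ^ β * ((K/2) ^ (-(β + γ) + 1) / (β + γ - 1))) :=
            (ENNReal.ofReal_mul h2β.le).symm
    have hsetu : {x : ℝ | K/2 < |x|} = Iio (-(K/2)) ∪ Ioi (K/2) := by
      ext x
      simp only [mem_setOf_eq, mem_union, mem_Iio, mem_Ioi, lt_abs]
      constructor
      · rintro (h | h)
        · exact Or.inr h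
        · exact Or.inl (by linarith)
      · rintro (h | h)
        · exact Or.inr (by linarith)
        · exact Or.inl h
    have hnegside : ∫⁻ x in Iio (-(K/2)), ENNReal.ofReal (2 ^ β * |x| ^ (-(β + γ)))
        = ∫⁻ x in Ioi (K/2), ENNReal.ofReal (2 ^ β * |x| ^ (-(β + γ))) := by
      apply lintegral_neg_set _ (meas_abs_rpow _ _) (fun x => by rw [abs_neg])
        measurableSet_Iio measurableSet_Ioi
      intro x
      simp only [mem_Iio, mem_Ioi]
      constructor <;> intro h <;> linarith
    rw [hf3, lintegral_indicator hopen, hsetu]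
    refine le_trans (lintegral_union_le _ _ _) ?_
    rw [hnegside, hval]
    rw [← ENNReal.ofReal_add (by positivity) (by positivity)]
  -- combine
  calc ∫⁻ σ : ℝ, ENNReal.ofReal (jap (σ - k) ^ (-β) * |σ| ^ (-γ))
      ≤ ∫⁻ σ : ℝ, (f1 σ + H (σ - k) + f3 σ) := lintegral_mono hpt
    _ = (∫⁻ σ, f1 σ) + (∫⁻ σ, H (σ - k)) + ∫⁻ σ, f3 σ := by
        rw [lintegral_add_left (f := fun σ => f1 σ + H (σ - k)) (hmf1.add hmf2), lintegral_add_left hmf1]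
    _ ≤ ENNReal.ofReal ((2 ^ β * K ^ (-β)) * (2 * (K ^ (1 - γ) / (1 - γ))))
        + ENNReal.ofReal ((2 ^ γ * K ^ (-γ)) * (2 + 2 * Mb β K))
        + ENNReal.ofReal (2 ^ β * ((K/2) ^ (-(β + γ) + 1) / (β + γ - 1))
          + 2 ^ β * ((K/2) ^ (-(β + γ) + 1) / (β + γ - 1))) :=
        add_le_add (add_le_add bound1 bound2) bound3
    _ ≤ ENNReal.ofReal (((2 ^ β * 2 / (1 - γ) + 2 ^ β * 2 ^ (β + γ - 1) * 2 / (β + γ - 1))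
          / Real.log 2 + 2 ^ γ * (2 / Real.log 2 + 2 * Cm)) * K ^ (-γ) * phiβ β k) := by
        have hmb := Mb_nonneg (β := β) hK1
        have hA0 : (0:ℝ) ≤ (2 ^ β * K ^ (-β)) * (2 * (K ^ (1 - γ) / (1 - γ))) :=
          mul_nonneg (by positivity)
            (mul_nonneg (by norm_num) (div_nonneg (Real.rpow_nonneg hK0.le _) h1γ.le))
        have hB0 : (0:ℝ) ≤ (2 ^ γ * K ^ (-γ)) * (2 + 2 * Mb β K) :=
          mul_nonneg (by positivity) (by linarith)
        have hT0 : (0:ℝ) ≤ 2 ^ β * ((K/2) ^ (-(β + γ) + 1) / (β + γ - 1)) :=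
          mul_nonneg h2β.le (div_nonneg (Real.rpow_nonneg hr0.le _) hs1.le)
        rw [← ENNReal.ofReal_add hA0 hB0, ← ENNReal.ofReal_add (by linarith) (by linarith)]
        apply ENNReal.ofReal_le_ofReal
        have hF1 : K ^ (-β) * K ^ (1 - γ) = K ^ (-γ) * K ^ (1 - β) := by
          rw [← Real.rpow_add hK0, ← Real.rpow_add hK0]
          congr 1
          ring
        have hF2 : (K/2) ^ (-(β + γ) + 1) = 2 ^ (β + γ - 1) * (K ^ (-γ) * K ^ (1 - β)) := by
          rw [Real.div_rpow hK0.le (by norm_num : (0:ℝ) ≤ 2),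
            show (-(β + γ) + 1 : ℝ) = -(β + γ - 1) by ring,
            Real.rpow_neg (by norm_num : (0:ℝ) ≤ 2), div_inv_eq_mul,
            show (-(β + γ - 1) : ℝ) = -γ + (1 - β) by ring,
            Real.rpow_add hK0]
          ring
        have hHφ := K_pow_le_phi β k
        rw [← hKdef] at hHφ
        have hHM : Mb β K ≤ Cm * phiβ β k := by
          have h := Mb_le_phi (β := β) k
          rw [← hKdef, ← hCmdef] at h
          exact h
        have hphiL := log_two_le_phi β k
        have hφ0 := phi_nonneg β k
        have hx0 : (0:ℝ) ≤ K ^ (-γ) := Real.rpow_nonneg hK0.le _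
        have hLHSeq : (2 ^ β * K ^ (-β)) * (2 * (K ^ (1 - γ) / (1 - γ)))
              + (2 ^ γ * K ^ (-γ)) * (2 + 2 * Mb β K)
              + (2 ^ β * ((K/2) ^ (-(β + γ) + 1) / (β + γ - 1))
                + 2 ^ β * ((K/2) ^ (-(β + γ) + 1) / (β + γ - 1)))
            = (2 ^ β * 2 / (1 - γ) + 2 ^ β * 2 ^ (β + γ - 1) * 2 / (β + γ - 1))
                * (K ^ (-γ) * K ^ (1 - β))
              + 2 ^ γ * (K ^ (-γ) * (2 + 2 * Mb β K)) := by
          rw [hF2]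
          linear_combination (2 ^ β * 2 / (1 - γ)) * hF1
        rw [hLHSeq]
        have hxy : K ^ (-γ) * K ^ (1 - β) ≤ K ^ (-γ) * (phiβ β k / Real.log 2) :=
          mul_le_mul_of_nonneg_left hHφ hx0
        have h2φ : (2:ℝ) ≤ 2 / Real.log 2 * phiβ β k := by
          have h := mul_le_mul_of_nonneg_left hphiL (le_of_lt (div_pos two_pos hL2))
          rwa [div_mul_cancel₀ 2 hL2.ne'] at h
        have hBnd : K ^ (-γ) * (2 + 2 * Mb β K)
            ≤ K ^ (-γ) * ((2 / Real.log 2 + 2 * Cm) * phiβ β k) := by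
          apply mul_le_mul_of_nonneg_left ?_ hx0
          have h2m : 2 * Mb β K ≤ 2 * (Cm * phiβ β k) := by linarith
          have hre : (2 / Real.log 2 + 2 * Cm) * phiβ β k
              = 2 / Real.log 2 * phiβ β k + 2 * (Cm * phiβ β k) := by ring
          rw [hre]
          linarith
        calc (2 ^ β * 2 / (1 - γ) + 2 ^ β * 2 ^ (β + γ - 1) * 2 / (β + γ - 1))
                * (K ^ (-γ) * K ^ (1 - β))
              + 2 ^ γ * (K ^ (-γ) * (2 + 2 * Mb β K))
            ≤ (2 ^ β * 2 / (1 - γ) + 2 ^ β * 2 ^ (β + γ - 1) * 2 / (β + γ - 1))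
                * (K ^ (-γ) * (phiβ β k / Real.log 2))
              + 2 ^ γ * (K ^ (-γ) * ((2 / Real.log 2 + 2 * Cm) * phiβ β k)) :=
              add_le_add (mul_le_mul_of_nonneg_left hxy hcoef.le)
                (mul_le_mul_of_nonneg_left hBnd h2γ.le)
          _ = ((2 ^ β * 2 / (1 - γ) + 2 ^ β * 2 ^ (β + γ - 1) * 2 / (β + γ - 1))
                / Real.log 2 + 2 ^ γ * (2 / Real.log 2 + 2 * Cm)) * K ^ (-γ) * phiβ β k := by
              ring
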